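/- Let t^a ∈ S be a monomial, let u_0 be a vertex of G, and let e_{i_1} = {u_0,w_1}, …, e_{i_m} = {u_0,w_m} (m ≥ 2) be distinct edges of the weighted subgraph H_{t^a} incident to u_0 (so a_{i_k} ≥ 1 for all k) such that a_{i_1}+⋯+a_{i_m} ≥ α(q−1) for some positive integer α. Let w_0 be a vertex with w_0 ≠ u_0 and such that {w_0,w_k} is an edge of G for all 1 ≤ k ≤ m. Then there exists a monomial t^b ∈ S of the same total degree as t^a such that: t^a − t^b ∈ I(X); wt_{t^b}(u_0) = wt_{t^a}(u_0) − α(q−1); the sum over 1 ≤ k ≤ m of the weights of the edges {w_0,w_k} in H_{t^b} is at least α(q−1) (in particular wt_{t^b}(w_0) ≥ α(q−1)); and wt_{t^b}(v) = wt_{t^a}(v) for every vertex v ∉ {u_0, w_0}. -/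

import Mathlib

open MvPolynomial

/-- The value `x^e = x_i * x_j` of an unordered pair `e = {i,j}` of vertices. -/
noncomputable def edgeVal {V K : Type*} [CommMonoid K] (x : V → K) (e : Sym2 V) : K :=
  Sym2.lift ⟨fun i j => x i * x j, fun i j => mul_comm _ _⟩ e

/-- The vanishing ideal `I(X)` of the algebraic toric set `X` parameterized by the
edges of the graph `G`: the ideal generated by all homogeneous polynomials vanishing
on all points `(x^{e_1}, …, x^{e_s})` with `x ∈ (K*)^n`. -/
noncomputable def vanishingIdeal (K : Type*) [Field K] {V : Type*} (G : SimpleGraph V) :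
    Ideal (MvPolynomial G.edgeSet K) :=
  Ideal.span {f | (∃ d, f.IsHomogeneous d) ∧
    ∀ x : V → Kˣ,
      MvPolynomial.eval (fun e : G.edgeSet => edgeVal (fun v => (x v : K)) (e : Sym2 V)) f = 0}

/-- The weighted degree of a vertex `v` in the weighted subgraph `H_{t^a}` of `G`
associated to the monomial `t^a`. -/
noncomputable def wt {V : Type*} [DecidableEq V] (G : SimpleGraph V) [Fintype G.edgeSet]
    (a : G.edgeSet →₀ ℕ) (v : V) : ℕ :=
  ∑ e : G.edgeSet, if v ∈ (e : Sym2 V) then a e else 0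
lemma exists_parts : ∀ {n : ℕ} (f : Fin n → ℕ) (N : ℕ), N ≤ ∑ k, f k →
    ∃ c : Fin n → ℕ, (∀ k, c k ≤ f k) ∧ ∑ k, c k = N := by
  intro n
  induction n with
  | zero => exact fun f N h => ⟨0, fun k => k.elim0, by simp at h ⊢; omega⟩
  | succ n ih =>
    intro f N h
    rw [Fin.sum_univ_succ] at h
    have hle : N - min N (f 0) ≤ ∑ i : Fin n, f i.succ := by omega
    obtain ⟨c, hc1, hc2⟩ := ih (fun k => f k.succ) (N - min N (f 0)) (by simpa using hle)
    refine ⟨Fin.cases (min N (f 0)) c, ?_, ?_⟩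
    · intro k
      refine Fin.cases ?_ ?_ k
      · simpa using min_le_right _ _
      · intro j; simpa using hc1 j
    · rw [Fin.sum_univ_succ]
      simp only [Fin.cases_zero, Fin.cases_succ]
      omega


/-- (Moving weight `α(q-1)` off a vertex.)  Given a monomial `t^a`, a
vertex `u₀` with distinct incident edges `{u₀, w_k}` (`m ≥ 2`) of `H_{t^a}` whose total
weight is at least `α(q-1)`, and a vertex `w₀ ≠ u₀` joined in `G` to every `w_k`, there
is a monomial `t^b` of the same total degree with `t^a - t^b ∈ I(X)`,
`wt_{t^b}(u₀) = wt_{t^a}(u₀) - α(q-1)`, total weight at least `α(q-1)` on the edges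
`{w₀, w_k}` (hence `wt_{t^b}(w₀) ≥ α(q-1)`), and all other weighted degrees unchanged. -/
theorem statement6 {V ι K : Type*} [Fintype V] [DecidableEq V] [Fintype ι] [DecidableEq ι]
    [Field K] [Fintype K]
    (p : V → ι) (hp : Function.Surjective p) (hr : 2 ≤ Fintype.card ι)
    (G : SimpleGraph V) [Fintype G.edgeSet] (hAdj : ∀ x y, G.Adj x y ↔ p x ≠ p y)
    (a : G.edgeSet →₀ ℕ) (u₀ : V) (m : ℕ) (hm : 2 ≤ m) (w : Fin m → V)
    (hinj : Function.Injective w)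
    (hadj0 : ∀ k, G.Adj u₀ (w k))
    (hpos : ∀ k, 1 ≤ a ⟨s(u₀, w k), G.mem_edgeSet.mpr (hadj0 k)⟩)
    (α : ℕ) (hα : 1 ≤ α)
    (hsum : α * (Fintype.card K - 1) ≤ ∑ k, a ⟨s(u₀, w k), G.mem_edgeSet.mpr (hadj0 k)⟩)
    (w₀ : V) (hw₀ : w₀ ≠ u₀) (hadjw : ∀ k, G.Adj w₀ (w k)) :
    ∃ b : G.edgeSet →₀ ℕ,
      (∑ e, b e) = (∑ e, a e) ∧
      ((monomial a 1 : MvPolynomial G.edgeSet K) - monomial b 1) ∈ vanishingIdeal K G ∧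
      wt G b u₀ = wt G a u₀ - α * (Fintype.card K - 1) ∧
      α * (Fintype.card K - 1) ≤ ∑ k, b ⟨s(w₀, w k), G.mem_edgeSet.mpr (hadjw k)⟩ ∧
      α * (Fintype.card K - 1) ≤ wt G b w₀ ∧
      ∀ v, v ≠ u₀ → v ≠ w₀ → wt G b v = wt G a v := by
  classical
  set N := α * (Fintype.card K - 1) with hNdef
  set eU : Fin m → G.edgeSet := fun k => ⟨s(u₀, w k), G.mem_edgeSet.mpr (hadj0 k)⟩ with heU
  set eW : Fin m → G.edgeSet := fun k => ⟨s(w₀, w k), G.mem_edgeSet.mpr (hadjw k)⟩ with heW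
  have hneU : ∀ k, u₀ ≠ w k := fun k => (hadj0 k).ne
  have hneW : ∀ k, w₀ ≠ w k := fun k => (hadjw k).ne
  have heUinj : Function.Injective eU := by
    intro j k h
    rw [Subtype.ext_iff] at h
    simp only [heU, Sym2.eq_iff] at h
    rcases h with ⟨-, h⟩ | ⟨h1, h2⟩
    · exact hinj h
    · exact absurd h1 (hneU k)
  have heWinj : Function.Injective eW := by
    intro j k h
    rw [Subtype.ext_iff] at h
    simp only [heW, Sym2.eq_iff] at h
    rcases h with ⟨-, h⟩ | ⟨h1, h2⟩
    · exact hinj h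
    · exact absurd h1 (hneW k)
  obtain ⟨c, hcle, hcsum⟩ := exists_parts (fun k => a (eU k)) N hsum
  set dU : G.edgeSet → ℕ := fun e => ∑ k, if e = eU k then c k else 0 with hdU
  set dW : G.edgeSet → ℕ := fun e => ∑ k, if e = eW k then c k else 0 with hdW
  have hdU_eU : ∀ k, dU (eU k) = c k := by
    intro k
    simp [hdU, heUinj.eq_iff, Finset.sum_ite_eq]
  have hdW_eW : ∀ k, dW (eW k) = c k := by
    intro k
    simp [hdW, heWinj.eq_iff, Finset.sum_ite_eq]
  have hdUle : ∀ e, dU e ≤ a e := by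
    intro e
    by_cases h : ∃ k, e = eU k
    · obtain ⟨k, rfl⟩ := h
      rw [hdU_eU k]; exact hcle k
    · have : dU e = 0 := Finset.sum_eq_zero fun k _ => by
        rw [if_neg (fun hh => h ⟨k, hh⟩)]
      omega
  set b : G.edgeSet →₀ ℕ := Finsupp.equivFunOnFinite.symm (fun e => a e - dU e + dW e)
    with hbdef
  have hb : ∀ e, b e = a e - dU e + dW e := fun e => rfl
  have key : ∀ e, b e + dU e = a e + dW e := by
    intro e; have := hdUle e; rw [hb]; omega
  -- sums of dU, dW over all edges
  have hdUsum : ∑ e, dU e = N := by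
    rw [hdU, Finset.sum_comm]
    simp [Finset.sum_ite_eq', hcsum]
  have hdWsum : ∑ e, dW e = N := by
    rw [hdW, Finset.sum_comm]
    simp [Finset.sum_ite_eq', hcsum]
  have hsum_eq : ∑ e, b e = ∑ e, a e := by
    have h1 : ∑ e, b e + ∑ e, dU e = ∑ e, a e + ∑ e, dW e := by
      rw [← Finset.sum_add_distrib, ← Finset.sum_add_distrib]
      exact Finset.sum_congr rfl fun e _ => key e
    omega
  -- the wt identity
  have hwt : ∀ v, wt G b v + (∑ k, if v ∈ (eU k : Sym2 V) then c k else 0)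
      = wt G a v + (∑ k, if v ∈ (eW k : Sym2 V) then c k else 0) := by
    intro v
    have swap : ∀ (g : Fin m → G.edgeSet),
        (∑ e : G.edgeSet, if v ∈ (e : Sym2 V) then (∑ k, if e = g k then c k else 0) else 0)
          = ∑ k, if v ∈ (g k : Sym2 V) then c k else 0 := by
      intro g
      have step : ∀ e : G.edgeSet,
          (if v ∈ (e : Sym2 V) then (∑ k, if e = g k then c k else 0) else 0)
            = ∑ k, if e = g k then (if v ∈ (g k : Sym2 V) then c k else 0) else 0 := by
        intro e
        by_cases hv : v ∈ (e : Sym2 V)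
        · rw [if_pos hv]
          refine Finset.sum_congr rfl fun k _ => ?_
          by_cases h : e = g k
          · rw [if_pos h, if_pos h, if_pos (h ▸ hv)]
          · rw [if_neg h, if_neg h]
        · rw [if_neg hv]
          symm
          refine Finset.sum_eq_zero fun k _ => ?_
          by_cases h : e = g k
          · rw [if_pos h, if_neg (h ▸ hv)]
          · rw [if_neg h]
      rw [Finset.sum_congr rfl fun e _ => step e, Finset.sum_comm]
      exact Finset.sum_congr rfl fun k _ => by simp [Finset.sum_ite_eq']
    have hU := swap eU
    have hW := swap eW
    simp only [wt]
    rw [← hU, ← hW, ← Finset.sum_add_distrib, ← Finset.sum_add_distrib]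
    refine Finset.sum_congr rfl fun e _ => ?_
    by_cases hv : v ∈ (e : Sym2 V)
    · simp only [if_pos hv]; exact key e
    · simp only [if_neg hv]
  have memU : ∀ k, u₀ ∈ (eU k : Sym2 V) := fun k => by
    simp [heU]
  have notmemW : ∀ k, u₀ ∉ (eW k : Sym2 V) := fun k => by
    simp [heW, Sym2.mem_iff]
    exact ⟨fun h => hw₀ h.symm, hneU k⟩
  have memW : ∀ k, w₀ ∈ (eW k : Sym2 V) := fun k => by
    simp [heW]
  have notmemU : ∀ k, w₀ ∉ (eU k : Sym2 V) := fun k => by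
    simp [heU, Sym2.mem_iff]
    exact ⟨hw₀, hneW k⟩
  have hwtu : wt G b u₀ + N = wt G a u₀ := by
    have := hwt u₀
    rw [Finset.sum_congr rfl fun k _ => if_pos (memU k),
      Finset.sum_congr rfl fun k _ => if_neg (notmemW k)] at this
    simpa [hcsum] using this
  have hwtw : wt G b w₀ = wt G a w₀ + N := by
    have := hwt w₀
    rw [Finset.sum_congr rfl fun k _ => if_neg (notmemU k),
      Finset.sum_congr rfl fun k _ => if_pos (memW k)] at this
    simpa [hcsum] using this
  refine ⟨b, hsum_eq, ?_, by omega, ?_, by omega, ?_⟩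
  · -- ideal membership
    apply Ideal.subset_span
    constructor
    · refine ⟨Finsupp.degree a, (isHomogeneous_monomial 1 rfl).sub
        (isHomogeneous_monomial 1 ?_)⟩
      have ha : Finsupp.degree a = ∑ e, a e := by
        rw [Finsupp.degree_apply, Finset.sum_subset (Finset.subset_univ _)]
        intro e _ he
        simpa using he
      have hbd : Finsupp.degree b = ∑ e, b e := by
        rw [Finsupp.degree_apply, Finset.sum_subset (Finset.subset_univ _)]
        intro e _ he
        simpa using he
      rw [hbd, ha, hsum_eq]
    · intro x
      rw [map_sub, eval_monomial, eval_monomial, one_mul, one_mul, sub_eq_zero]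
      set Y : G.edgeSet → Kˣ :=
        fun e => Sym2.lift ⟨fun i j => x i * x j, fun i j => mul_comm _ _⟩ (e : Sym2 V)
        with hYdef
      have hY : ∀ e : G.edgeSet,
          edgeVal (fun v => (x v : K)) (e : Sym2 V) = ((Y e : Kˣ) : K) := by
        rintro ⟨e, he⟩
        induction e with
        | _ i j => simp [edgeVal, hYdef]
      have hcast : ∀ f : G.edgeSet →₀ ℕ,
          (f.prod fun e n => edgeVal (fun v => (x v : K)) (e : Sym2 V) ^ n)
            = ((∏ e, Y e ^ f e : Kˣ) : K) := by
        intro f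
        rw [Finsupp.prod_fintype _ _ (fun e => pow_zero _),
          show ((∏ e, Y e ^ f e : Kˣ) : K) = ∏ e, ((Y e ^ f e : Kˣ) : K) from
            map_prod (Units.coeHom K) _ _]
        exact Finset.prod_congr rfl fun e _ => by rw [hY]; simp
      rw [hcast, hcast]
      congr 1
      -- unit-level equality
      have hone : ∀ u : Kˣ, u ^ N = 1 := by
        intro u
        rw [hNdef, mul_comm, pow_mul, ← Fintype.card_units, pow_card_eq_one, one_pow]
      have hprod : ∀ (g : Fin m → G.edgeSet),
          (∏ e, Y e ^ (∑ k, if e = g k then c k else 0)) = ∏ k, Y (g k) ^ c k := by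
        intro g
        have : ∀ e : G.edgeSet, Y e ^ (∑ k, if e = g k then c k else 0)
            = ∏ k, if e = g k then Y (g k) ^ c k else 1 := by
          intro e
          rw [← Finset.prod_pow_eq_pow_sum]
          refine Finset.prod_congr rfl fun k _ => ?_
          by_cases h : e = g k
          · rw [if_pos h, if_pos h, h]
          · rw [if_neg h, if_neg h, pow_zero]
        rw [Finset.prod_congr rfl fun e _ => this e, Finset.prod_comm]
        exact Finset.prod_congr rfl fun k _ => by simp [Finset.prod_ite_eq']
      have hYU : ∀ k, Y (eU k) = x u₀ * x (w k) := fun k => by simp [hYdef, heU]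
      have hYW : ∀ k, Y (eW k) = x w₀ * x (w k) := fun k => by simp [hYdef, heW]
      have hprodU : ∏ e, Y e ^ dU e = ∏ k, (x (w k)) ^ c k := by
        rw [hdU, hprod eU]
        rw [Finset.prod_congr rfl fun k _ => by rw [hYU k, mul_pow],
          Finset.prod_mul_distrib, Finset.prod_pow_eq_pow_sum, hcsum, hone, one_mul]
      have hprodW : ∏ e, Y e ^ dW e = ∏ k, (x (w k)) ^ c k := by
        rw [hdW, hprod eW]
        rw [Finset.prod_congr rfl fun k _ => by rw [hYW k, mul_pow],
          Finset.prod_mul_distrib, Finset.prod_pow_eq_pow_sum, hcsum, hone, one_mul]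
      have hmain : (∏ e, Y e ^ a e) * ∏ e, Y e ^ dW e
          = (∏ e, Y e ^ b e) * ∏ e, Y e ^ dU e := by
        rw [← Finset.prod_mul_distrib, ← Finset.prod_mul_distrib]
        refine Finset.prod_congr rfl fun e _ => ?_
        rw [← pow_add, ← pow_add, ← key e, add_comm (b e)]
      rw [hprodU, hprodW] at hmain
      exact mul_right_cancel hmain
  · -- weight on eW edges
    have hkle : ∀ k, c k ≤ b (eW k) := by
      intro k
      rw [hb, hdW_eW]
      omega
    calc N = ∑ k, c k := hcsum.symm
      _ ≤ ∑ k, b (eW k) := Finset.sum_le_sum fun k _ => hkle k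
  · -- other vertices
    intro v hvu hvw
    have hU : ∀ k, (v ∈ (eU k : Sym2 V)) ↔ v = w k := by
      intro k
      simp [heU, Sym2.mem_iff, hvu]
    have hW : ∀ k, (v ∈ (eW k : Sym2 V)) ↔ v = w k := by
      intro k
      simp [heW, Sym2.mem_iff, hvw]
    have := hwt v
    rw [Finset.sum_congr rfl fun k _ => if_congr (hU k) rfl rfl,
      Finset.sum_congr rfl fun k _ => if_congr (hW k) rfl rfl] at this
    omega
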